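/- (Quasiprobability decomposition of the identity via NME teleportation.) For every real number k ≥ 0 and every 2×2 complex matrix ρ: ρ = ((k²+1)/(k+1)²) · Σ_{i∈{1,2}} U_i E_tel^{Φ^k}(U_i† ρ U_i) U_i† − ((k−1)²/(k+1)²) · Σ_{j∈{0,1}} Tr[|j⟩⟨j| ρ] · X |j⟩⟨j| X, where U₁ = H and U₂ = S·H. -/

import Mathlib

open Matrix Kronecker

noncomputable section

/-- Standard basis ket |0⟩ of a qubit ℂ². -/
def e0 : Fin 2 → ℂ := ![1, 0]

/-- Standard basis ket |1⟩ of a qubit ℂ². -/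
def e1 : Fin 2 → ℂ := ![0, 1]

/-- The standard basis kets, indexed: |j⟩ for j ∈ {0,1}. -/
def eb : Fin 2 → Fin 2 → ℂ := ![e0, e1]

/-- Tensor (Kronecker) product of two one-qubit vectors. -/
def tens (v w : Fin 2 → ℂ) : Fin 2 × Fin 2 → ℂ := fun p => v p.1 * w p.2

/-- The maximally entangled state |Φ⟩ = (1/√2)(|00⟩ + |11⟩). -/
def ketPhi : Fin 2 × Fin 2 → ℂ :=
  ((1 / Real.sqrt 2 : ℝ) : ℂ) • (tens e0 e0 + tens e1 e1)

/-- The non-maximally entangled state |Φ^k⟩ = K(|00⟩ + k|11⟩), K = 1/√(1+k²). -/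
def ketPhiK (k : ℝ) : Fin 2 × Fin 2 → ℂ :=
  ((1 / Real.sqrt (1 + k ^ 2) : ℝ) : ℂ) • (tens e0 e0 + (k : ℂ) • tens e1 e1)

/-- Density operator |v⟩⟨v| of a pure state. -/
def dens {ι : Type*} (v : ι → ℂ) : Matrix ι ι ℂ := vecMulVec v (star v)

/-- Density operator Φ = |Φ⟩⟨Φ|. -/
def PhiD : Matrix (Fin 2 × Fin 2) (Fin 2 × Fin 2) ℂ := dens ketPhi

/-- Density operator Φ^k = |Φ^k⟩⟨Φ^k|. -/
def PhiKD (k : ℝ) : Matrix (Fin 2 × Fin 2) (Fin 2 × Fin 2) ℂ := dens (ketPhiK k)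

/-- The overlap ⟨v| M |v⟩. -/
def ov {ι : Type*} [Fintype ι] (v : ι → ℂ) (M : Matrix ι ι ℂ) : ℂ :=
  star v ⬝ᵥ M.mulVec v

/-- Pauli X. -/
def Xm : Matrix (Fin 2) (Fin 2) ℂ := !![0, 1; 1, 0]

/-- Pauli Y. -/
def Ym : Matrix (Fin 2) (Fin 2) ℂ := !![0, -Complex.I; Complex.I, 0]

/-- Pauli Z. -/
def Zm : Matrix (Fin 2) (Fin 2) ℂ := !![1, 0; 0, -1]

/-- The Paulis I, X, Y, Z indexed by Fin 4. -/
def pauli : Fin 4 → Matrix (Fin 2) (Fin 2) ℂ := ![1, Xm, Ym, Zm]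

/-- The Bell state |Φ^σ⟩ = (σ ⊗ I)|Φ⟩ for σ the i-th Pauli. -/
def bell (i : Fin 4) : Fin 2 × Fin 2 → ℂ :=
  ((pauli i) ⊗ₖ (1 : Matrix (Fin 2) (Fin 2) ℂ)).mulVec ketPhi

/-- The 2×8 matrix ⟨v| ⊗ I₂ acting on ℂ²⊗ℂ²⊗ℂ² (bra on the first two factors). -/
def braI (v : Fin 2 × Fin 2 → ℂ) : Matrix (Fin 2) (Fin 2 × Fin 2 × Fin 2) ℂ :=
  Matrix.of fun i p => star (v (p.1, p.2.1)) * (if i = p.2.2 then 1 else 0)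

/-- Teleportation Kraus operator K_σ = σ · (⟨Φ^σ| ⊗ I₂). -/
def Kmat (σ : Fin 4) : Matrix (Fin 2) (Fin 2 × Fin 2 × Fin 2) ℂ :=
  pauli σ * braI (bell σ)

/-- Teleportation channel with resource state ρ: E_tel^ρ(φ) = Σ_σ K_σ (φ ⊗ ρ) K_σ†. -/
def Etel (ρ : Matrix (Fin 2 × Fin 2) (Fin 2 × Fin 2) ℂ)
    (φ : Matrix (Fin 2) (Fin 2) ℂ) : Matrix (Fin 2) (Fin 2) ℂ :=
  ∑ σ : Fin 4, Kmat σ * (φ ⊗ₖ ρ) * (Kmat σ)ᴴ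

/-- Hadamard gate. -/
def Hm : Matrix (Fin 2) (Fin 2) ℂ := ((1 / Real.sqrt 2 : ℝ) : ℂ) • !![1, 1; 1, -1]

/-- Phase gate S = diag(1, i). -/
def Sm : Matrix (Fin 2) (Fin 2) ℂ := !![1, 0; 0, Complex.I]

lemma bell_apply (σ : Fin 4) (p : Fin 2 × Fin 2) :
    bell σ p = ((1 / Real.sqrt 2 : ℝ) : ℂ) * pauli σ p.1 p.2 := by
  obtain ⟨a,b⟩ := p
  fin_cases σ <;> fin_cases a <;> fin_cases b <;>
    simp [bell, pauli, ketPhi, tens, e0, e1, Xm, Ym, Zm, Matrix.mulVec, dotProduct,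
      kroneckerMap_apply, Fintype.sum_prod_type, Fin.sum_univ_two, Matrix.one_apply] <;>
    try ring

lemma Kmat_apply (σ : Fin 4) (i : Fin 2) (p : Fin 2 × Fin 2 × Fin 2) :
    Kmat σ i p = ((1 / Real.sqrt 2 : ℝ) : ℂ) * star (pauli σ p.1 p.2.1) * pauli σ i p.2.2 := by
  simp [Kmat, braI, bell_apply, Matrix.mul_apply, Fin.sum_univ_two]
  fin_cases σ <;> obtain ⟨a,b,c⟩ := p <;> fin_cases i <;> fin_cases a <;> fin_cases b <;> fin_cases c <;>
    (try simp [pauli, Xm, Ym, Zm]) <;> try ring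
set_option maxHeartbeats 4000000 in
set_option maxRecDepth 100000 in
lemma Etel_eq (k : ℝ) (φ : Matrix (Fin 2) (Fin 2) ℂ) :
    Etel (PhiKD k) φ =
      !![φ 0 0, ((2*k/(1+k^2) : ℝ) : ℂ) * φ 0 1;
         ((2*k/(1+k^2) : ℝ) : ℂ) * φ 1 0, φ 1 1] := by
  have h0 : (1 : ℝ) + k ^ 2 ≠ 0 := by positivity
  have hs : ((Real.sqrt (1 + k ^ 2) : ℝ) : ℂ) ^ 2 = ((1 + k ^ 2 : ℝ) : ℂ) := by
    rw [← Complex.ofReal_pow, Real.sq_sqrt (by positivity)]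
  have hr : ((Real.sqrt 2 : ℝ) : ℂ) ^ 2 = 2 := by
    rw [← Complex.ofReal_pow, Real.sq_sqrt (by norm_num)]; norm_num
  have h0c : (1 : ℂ) + (k:ℂ) ^ 2 ≠ 0 := by
    have := Complex.ofReal_ne_zero.mpr h0; push_cast at this; exact this
  ext i j
  fin_cases i <;> fin_cases j <;>
    · simp [Etel, Kmat_apply, PhiKD, ketPhiK, dens, vecMulVec_apply, tens, e0, e1,
        pauli, Xm, Ym, Zm, Matrix.mul_apply, kroneckerMap_apply, Matrix.conjTranspose_apply,
        Fin.sum_univ_four, Fintype.sum_prod_type, Fin.sum_univ_two]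
      field_simp
      ring_nf
      simp [hs, hr]
      try ring_nf
      try field_simp
      try ring
set_option maxHeartbeats 4000000 in
set_option maxRecDepth 100000 in
/-- Quasiprobability decomposition of the identity via NME teleportation. -/
theorem qpd_identity_via_nme_teleportation (k : ℝ) (hk : 0 ≤ k)
    (ρ : Matrix (Fin 2) (Fin 2) ℂ) :
    ρ = (((k ^ 2 + 1) / (k + 1) ^ 2 : ℝ) : ℂ) •
          (Hm * Etel (PhiKD k) (Hmᴴ * ρ * Hm) * Hmᴴ
            + (Sm * Hm) * Etel (PhiKD k) ((Sm * Hm)ᴴ * ρ * (Sm * Hm)) * (Sm * Hm)ᴴ)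
        - (((k - 1) ^ 2 / (k + 1) ^ 2 : ℝ) : ℂ) •
            ∑ j : Fin 2, (dens (eb j) * ρ).trace • (Xm * dens (eb j) * Xm) := by
  have h0 : (1 : ℝ) + k ^ 2 ≠ 0 := by positivity
  have h0c : (1 : ℂ) + (k:ℂ) ^ 2 ≠ 0 := by
    have := Complex.ofReal_ne_zero.mpr h0; push_cast at this; exact this
  have hk1 : (k:ℂ) + 1 ≠ 0 := by
    have h1 : (k + 1 : ℝ) ≠ 0 := by positivity
    have := Complex.ofReal_ne_zero.mpr h1; push_cast at this; exact this
  have hr : ((Real.sqrt 2 : ℝ) : ℂ) ^ 2 = 2 := by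
    rw [← Complex.ofReal_pow, Real.sq_sqrt (by norm_num)]; norm_num
  have hrne : ((Real.sqrt 2 : ℝ) : ℂ) ≠ 0 := by
    intro h
    have : ((Real.sqrt 2 : ℝ) : ℂ) ^ 2 = 0 := by rw [h]; ring
    rw [hr] at this; norm_num at this
  have h7 : ((Real.sqrt 2:ℝ):ℂ) ^ 7 = 8 * ((Real.sqrt 2:ℝ):ℂ) := by
    have h : ((Real.sqrt 2:ℝ):ℂ) ^ 7 = (((Real.sqrt 2:ℝ):ℂ) ^ 2) ^ 3 * ((Real.sqrt 2:ℝ):ℂ) := by ring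
    rw [h, hr]; norm_num
  have hden : ((k:ℂ) ^ 2 * ((Real.sqrt 2:ℝ):ℂ) ^ 7 + ((Real.sqrt 2:ℝ):ℂ) ^ 7) = 8 * ((Real.sqrt 2:ℝ):ℂ) * (1 + (k:ℂ) ^ 2) := by
    rw [h7]; ring
  have hrinv : ((Real.sqrt 2:ℝ):ℂ)⁻¹ = ((Real.sqrt 2:ℝ):ℂ) / 2 := by
    rw [eq_div_iff (by norm_num : (2:ℂ) ≠ 0), inv_mul_eq_iff_eq_mul₀ hrne]
    linear_combination -hr
  have h4 : ((Real.sqrt 2:ℝ):ℂ) ^ 4 = 4 := by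
    linear_combination (((Real.sqrt 2:ℝ):ℂ) ^ 2 + 2) * hr
  have hbig : (65536 + (k:ℂ) ^ 2 * 262144 + (k:ℂ) ^ 4 * 393216 + (k:ℂ) ^ 6 * 262144 + (k:ℂ) ^ 8 * 65536) ≠ 0 := by
    have h : (65536 + (k:ℂ) ^ 2 * 262144 + (k:ℂ) ^ 4 * 393216 + (k:ℂ) ^ 6 * 262144 + (k:ℂ) ^ 8 * 65536)
        = 65536 * (1 + (k:ℂ) ^ 2) ^ 4 := by ring
    rw [h]
    exact mul_ne_zero (by norm_num) (pow_ne_zero _ h0c)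
  rw [Etel_eq, Etel_eq]
  ext i j
  fin_cases i <;> fin_cases j <;>
  · simp [Hm, Sm, Xm, dens, eb, e0, e1, vecMulVec_apply, Matrix.mul_apply,
      Matrix.trace, Matrix.diag, Fin.sum_univ_two, Matrix.conjTranspose_apply,
      Matrix.vecMul, dotProduct, Pi.star_apply, Matrix.sum_apply, vecMulVec,
      Matrix.vecHead, Matrix.vecTail]
    field_simp
    ring_nf
    try simp only [Complex.I_sq]
    try ring_nf
    try rw [hden, mul_inv, mul_inv, hrinv]
    try field_simp
    try ring_nf
    try simp only [h4, hr]
    try ring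
    try simp [h4, hr]
    try ring
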